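/- Let p be a prime, let m be a non-negative integer, let w ≥ 1, and let a₁, …, a_w ∈ ℤ_p^m. For each integer e with 0 ≤ e ≤ m, let λ(e) denote the fraction of subgroups H of ℤ_p^m of order p^e such that a_i − a_j ∉ H for all i ≠ j (i.e., a₁, …, a_w lie in pairwise distinct cosets of H). Then there exists a real polynomial P with deg(P) ≤ w such that λ(e) = P(p^e) for every integer e with 0 ≤ e ≤ m. -/

import Mathlib

open Module Polynomial Finset

set_option linter.unusedSectionVars false

namespace FracSub

variable {K : Type*} [Field K] [Finite K] {V : Type*} [AddCommGroup V] [Module K V]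
  [Module.Finite K V] [Finite V]

local instance (priority := 100) : Finite (Submodule K V) :=
  Finite.of_injective (fun W : Submodule K V => (W : Set V)) SetLike.coe_injective

/-- The number of submodules of finrank `e` containing a fixed submodule `Ks`. -/
noncomputable def ncnt (Ks : Submodule K V) (e : ℕ) : ℕ :=
  Nat.card {W : Submodule K V // finrank K W = e ∧ Ks ≤ W}

lemma card_submodule (W : Submodule K V) :
    Nat.card W = Nat.card K ^ finrank K W := by
  classical
  letI : Fintype K := Fintype.ofFinite K
  letI : Fintype W := Fintype.ofFinite W
  rw [Nat.card_eq_fintype_card, Nat.card_eq_fintype_card, card_eq_pow_finrank (K := K) (V := W)]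

lemma card_V : Nat.card V = Nat.card K ^ finrank K V := by
  have := card_submodule (K := K) (⊤ : Submodule K V)
  rwa [Nat.card_congr Submodule.topEquiv.toEquiv, finrank_top] at this

lemma exists_submodule_finrank (e : ℕ) (he : e ≤ finrank K V) :
    ∃ W : Submodule K V, finrank K W = e := by
  classical
  let b := Module.finBasis K V
  refine ⟨Submodule.span K (Set.range (b ∘ Fin.castLE he)), ?_⟩
  rw [finrank_span_eq_card (b.linearIndependent.comp _ (Fin.castLE_injective he))]
  simp

lemma ncnt_bot_ne_zero (e : ℕ) (he : e ≤ finrank K V) :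
    ncnt (⊥ : Submodule K V) e ≠ 0 := by
  obtain ⟨W, hW⟩ := exists_submodule_finrank (K := K) (V := V) e he
  have : Nonempty {W : Submodule K V // finrank K W = e ∧ (⊥ : Submodule K V) ≤ W} :=
    ⟨⟨W, hW, bot_le⟩⟩
  exact Nat.card_pos.ne'

lemma card_submodule_subtype_congr {V' : Type*} [AddCommGroup V'] [Module K V']
    (f : V ≃ₗ[K] V') (P : ℕ → Prop) :
    Nat.card {W : Submodule K V // P (finrank K W)} =
      Nat.card {W : Submodule K V' // P (finrank K W)} := by
  refine Nat.card_congr ((Submodule.orderIsoMapComap f).toEquiv.subtypeEquiv fun W => ?_)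
  have : finrank K (Submodule.map (f : V →ₗ[K] V') W) = finrank K W :=
    LinearEquiv.finrank_map_eq f W
  simp only [RelIso.coe_fn_toEquiv, Submodule.orderIsoMapComap_apply]
  exact Iff.of_eq (congrArg P this.symm)

lemma finrank_comap_mkQ (Ks : Submodule K V) (U : Submodule K (V ⧸ Ks)) :
    finrank K (U.comap Ks.mkQ) = finrank K U + finrank K Ks := by
  set W := U.comap Ks.mkQ with hW
  have hle : Ks ≤ W := by
    intro x hx
    have hx0 : Ks.mkQ x = 0 := (Submodule.Quotient.mk_eq_zero Ks).2 hx
    simp [hW, Submodule.mem_comap, hx0]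
  have h1 : finrank K (LinearMap.range (Ks.mkQ.domRestrict W)) +
      finrank K (LinearMap.ker (Ks.mkQ.domRestrict W)) = finrank K W :=
    LinearMap.finrank_range_add_finrank_ker _
  have h2 : LinearMap.range (Ks.mkQ.domRestrict W) = U := by
    rw [LinearMap.range_domRestrict]
    exact Submodule.map_comap_eq_of_surjective Ks.mkQ_surjective U
  have h3 : LinearMap.ker (Ks.mkQ.domRestrict W) = Ks.comap W.subtype := by
    rw [LinearMap.ker_domRestrict, Submodule.ker_mkQ]
  have h4 : finrank K (Ks.comap W.subtype) = finrank K Ks :=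
    (Submodule.comapSubtypeEquivOfLe hle).finrank_eq
  rw [h2, h3, h4] at h1
  exact h1.symm

lemma ncnt_eq_card_quot (Ks : Submodule K V) (e : ℕ) :
    ncnt Ks e = Nat.card {U : Submodule K (V ⧸ Ks) // finrank K U + finrank K Ks = e} := by
  have hker : ∀ U : Submodule K (V ⧸ Ks), Ks ≤ U.comap Ks.mkQ := by
    intro U x hx
    have hx0 : Ks.mkQ x = 0 := (Submodule.Quotient.mk_eq_zero Ks).2 hx
    simp [Submodule.mem_comap, hx0]
  refine Nat.card_congr ⟨fun W => ⟨W.1.map Ks.mkQ, ?_⟩,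
    fun U => ⟨U.1.comap Ks.mkQ, by rw [finrank_comap_mkQ]; exact U.2, hker U.1⟩, ?_, ?_⟩
  · have hcm : (W.1.map Ks.mkQ).comap Ks.mkQ = W.1 := by
      rw [Submodule.comap_map_mkQ, sup_eq_right.2 W.2.2]
    have := finrank_comap_mkQ Ks (W.1.map Ks.mkQ)
    rw [hcm, W.2.1] at this
    omega
  · rintro ⟨W, hW, hle⟩
    ext1
    exact (by rw [Submodule.comap_map_mkQ, sup_eq_right.2 hle] :
      (W.map Ks.mkQ).comap Ks.mkQ = W)
  · rintro ⟨U, hU⟩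
    ext1
    exact Submodule.map_comap_eq_of_surjective Ks.mkQ_surjective U

lemma ncnt_congr {Ks Ks' : Submodule K V} (h : finrank K Ks = finrank K Ks') (e : ℕ) :
    ncnt Ks e = ncnt Ks' e := by
  rw [ncnt_eq_card_quot, ncnt_eq_card_quot, h]
  have hfr : finrank K (V ⧸ Ks) = finrank K (V ⧸ Ks') := by
    have h1 := Submodule.finrank_quotient_add_finrank Ks
    have h2 := Submodule.finrank_quotient_add_finrank Ks'
    omega
  haveI : Finite (V ⧸ Ks) := Quotient.finite _
  haveI : Finite (V ⧸ Ks') := Quotient.finite _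
  exact card_submodule_subtype_congr (LinearEquiv.ofFinrankEq _ _ hfr)
    (fun d => d + finrank K Ks' = e)

lemma ncnt_eq_zero {Ks : Submodule K V} {e : ℕ} (h : e < finrank K Ks) : ncnt Ks e = 0 := by
  rw [ncnt, Nat.card_eq_zero]
  left
  refine ⟨fun W => ?_⟩
  obtain ⟨W, hW, hle⟩ := W
  exact absurd (hW ▸ Submodule.finrank_mono hle) (by omega)

lemma finrank_sup_span_singleton {Ks : Submodule K V} {v : V} (hv : v ∉ Ks) :
    finrank K ↥(Ks ⊔ Submodule.span K ({v} : Set V)) = finrank K Ks + 1 := by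
  have hv0 : v ≠ 0 := fun h => hv (h ▸ Ks.zero_mem)
  have h1 : finrank K ↥(Submodule.span K ({v} : Set V)) = 1 := finrank_span_singleton hv0
  have h2 : Ks ⊓ Submodule.span K ({v} : Set V) = ⊥ :=
    (Submodule.disjoint_span_singleton.2 (fun h => absurd h hv)).eq_bot
  have h3 := Submodule.finrank_sup_add_finrank_inf_eq Ks (Submodule.span K ({v} : Set V))
  rw [h1, h2, finrank_bot] at h3
  omega

lemma dc (Ks Ks' : Submodule K V) (k e : ℕ) (hk : finrank K Ks = k)
    (hk' : finrank K Ks' = k + 1) :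
    ncnt Ks e * (Nat.card K ^ e - Nat.card K ^ k) =
      (Nat.card K ^ finrank K V - Nat.card K ^ k) * ncnt Ks' e := by
  classical
  letI : Fintype (Submodule K V) := Fintype.ofFinite _
  letI : Fintype V := Fintype.ofFinite V
  set q := Nat.card K with hq
  set A : Finset (Submodule K V) :=
    univ.filter (fun W => finrank K W = e ∧ Ks ≤ W) with hA
  have hAcard : A.card = ncnt Ks e := by
    rw [ncnt, Nat.card_eq_fintype_card, Fintype.card_subtype]
  have hWcard : ∀ W : Submodule K V, (univ.filter (fun v => v ∈ W)).card = q ^ finrank K W := by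
    intro W
    rw [← Fintype.card_subtype, ← Nat.card_eq_fintype_card, card_submodule]
  -- double counting
  have key : ∑ W ∈ A, (univ.filter (fun v => v ∈ W ∧ v ∉ Ks)).card
      = ∑ v ∈ univ.filter (fun v : V => v ∉ Ks), (A.filter (fun W => v ∈ W)).card := by
    simp only [Finset.card_filter]
    rw [Finset.sum_comm]
    rw [Finset.sum_filter]
    refine Finset.sum_congr rfl fun v _ => ?_
    by_cases hv : v ∈ Ks
    · simp [hv]
    · simp [hv]
  -- evaluate per-W counts
  have hperW : ∀ W ∈ A, (univ.filter (fun v => v ∈ W ∧ v ∉ Ks)).card = q ^ e - q ^ k := by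
    intro W hW
    rw [hA, Finset.mem_filter] at hW
    obtain ⟨-, hWe, hWle⟩ := hW
    have hset : univ.filter (fun v => v ∈ W ∧ v ∉ Ks)
        = univ.filter (fun v => v ∈ W) \ univ.filter (fun v => v ∈ Ks) := by
      ext v; simp
    rw [hset, Finset.card_sdiff_of_subset (by
      intro v hv
      simp only [Finset.mem_filter, Finset.mem_univ, true_and] at hv ⊢
      exact hWle hv)]
    rw [hWcard, hWcard, hWe, hk]
  -- evaluate per-v counts
  have hperv : ∀ v ∈ univ.filter (fun v : V => v ∉ Ks),
      (A.filter (fun W => v ∈ W)).card = ncnt Ks' e := by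
    intro v hv
    simp only [Finset.mem_filter, Finset.mem_univ, true_and] at hv
    have hfil : A.filter (fun W => v ∈ W)
        = univ.filter (fun W : Submodule K V =>
            finrank K W = e ∧ Ks ⊔ Submodule.span K ({v} : Set V) ≤ W) := by
      rw [hA, Finset.filter_filter]
      refine Finset.filter_congr fun W _ => ?_
      constructor
      · rintro ⟨⟨hWe, hle⟩, hvW⟩
        exact ⟨hWe, sup_le hle (by
          rw [Submodule.span_le, Set.singleton_subset_iff]; exact hvW)⟩
      · rintro ⟨hWe, hle⟩
        refine ⟨⟨hWe, le_trans le_sup_left hle⟩, ?_⟩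
        exact hle (Submodule.mem_sup_right (Submodule.mem_span_singleton_self v))
    rw [hfil, ← Fintype.card_subtype, ← Nat.card_eq_fintype_card]
    have : finrank K ↥(Ks ⊔ Submodule.span K ({v} : Set V)) = finrank K Ks' := by
      rw [finrank_sup_span_singleton hv, hk, hk']
    exact ncnt_congr this e
  have hBcard : (univ.filter (fun v : V => v ∉ Ks)).card = q ^ finrank K V - q ^ k := by
    have : univ.filter (fun v : V => v ∉ Ks) = univ \ univ.filter (fun v => v ∈ Ks) := by
      ext v; simp
    rw [this, Finset.card_sdiff_of_subset (Finset.filter_subset _ _), hWcard, hk]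
    congr 1
    have hV := card_V (K := K) (V := V)
    rw [Finset.card_univ, ← Nat.card_eq_fintype_card, hV]
  calc ncnt Ks e * (q ^ e - q ^ k)
      = ∑ W ∈ A, (q ^ e - q ^ k) := by rw [Finset.sum_const, hAcard, smul_eq_mul, Nat.mul_comm]
    _ = ∑ W ∈ A, (univ.filter (fun v => v ∈ W ∧ v ∉ Ks)).card :=
        (Finset.sum_congr rfl hperW).symm
    _ = ∑ v ∈ univ.filter (fun v : V => v ∉ Ks), (A.filter (fun W => v ∈ W)).card := key
    _ = ∑ v ∈ univ.filter (fun v : V => v ∉ Ks), ncnt Ks' e := Finset.sum_congr rfl hperv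
    _ = (q ^ finrank K V - q ^ k) * ncnt Ks' e := by
        rw [Finset.sum_const, hBcard, smul_eq_mul]

lemma one_lt_cardK : 1 < Nat.card K := Finite.one_lt_card

lemma prod_formula (k : ℕ) (Ks : Submodule K V) (hKs : finrank K Ks = k)
    (e : ℕ) (he : e ≤ finrank K V) :
    (ncnt Ks e : ℝ) * ∏ i ∈ Finset.range k,
        ((Nat.card K : ℝ) ^ finrank K V - (Nat.card K : ℝ) ^ i) =
      (ncnt (⊥ : Submodule K V) e : ℝ) * ∏ i ∈ Finset.range k,
        ((Nat.card K : ℝ) ^ e - (Nat.card K : ℝ) ^ i) := by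
  induction k generalizing Ks with
  | zero =>
    have hb : Ks = ⊥ := Submodule.finrank_eq_zero.1 hKs
    simp [hb]
  | succ k ih =>
    have hkn : k ≤ finrank K V := by have := Ks.finrank_le; omega
    obtain ⟨Ks₀, hKs₀⟩ := exists_submodule_finrank (K := K) (V := V) k hkn
    have hIH := ih Ks₀ hKs₀
    have hdc := dc Ks₀ Ks k e hKs₀ hKs
    have hq1 : 1 < Nat.card K := one_lt_cardK
    have hdcR : (ncnt Ks₀ e : ℝ) * ((Nat.card K : ℝ) ^ e - (Nat.card K : ℝ) ^ k)
        = ((Nat.card K : ℝ) ^ finrank K V - (Nat.card K : ℝ) ^ k) * (ncnt Ks e : ℝ) := by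
      rcases le_or_gt k e with hke | hek
      · have h1 : Nat.card K ^ k ≤ Nat.card K ^ e := Nat.pow_le_pow_right (by omega) hke
        have h2 : Nat.card K ^ k ≤ Nat.card K ^ finrank K V :=
          Nat.pow_le_pow_right (by omega) hkn
        have := congrArg (fun x : ℕ => (x : ℝ)) hdc
        push_cast [Nat.cast_sub h1, Nat.cast_sub h2] at this
        exact this
      · have h0 : ncnt Ks₀ e = 0 := ncnt_eq_zero (by omega)
        have h0' : ncnt Ks e = 0 := ncnt_eq_zero (by omega)
        simp [h0, h0']
    rw [Finset.prod_range_succ, Finset.prod_range_succ]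
    calc (ncnt Ks e : ℝ) * ((∏ i ∈ Finset.range k,
            ((Nat.card K : ℝ) ^ finrank K V - (Nat.card K : ℝ) ^ i)) *
            ((Nat.card K : ℝ) ^ finrank K V - (Nat.card K : ℝ) ^ k))
        = ((ncnt Ks₀ e : ℝ) * ((Nat.card K : ℝ) ^ e - (Nat.card K : ℝ) ^ k)) *
            ∏ i ∈ Finset.range k,
              ((Nat.card K : ℝ) ^ finrank K V - (Nat.card K : ℝ) ^ i) := by
          rw [hdcR]; ring
      _ = ((Nat.card K : ℝ) ^ e - (Nat.card K : ℝ) ^ k) *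
            ((ncnt Ks₀ e : ℝ) * ∏ i ∈ Finset.range k,
              ((Nat.card K : ℝ) ^ finrank K V - (Nat.card K : ℝ) ^ i)) := by ring
      _ = ((Nat.card K : ℝ) ^ e - (Nat.card K : ℝ) ^ k) *
            ((ncnt (⊥ : Submodule K V) e : ℝ) * ∏ i ∈ Finset.range k,
              ((Nat.card K : ℝ) ^ e - (Nat.card K : ℝ) ^ i)) := by rw [hIH]
      _ = (ncnt (⊥ : Submodule K V) e : ℝ) * ((∏ i ∈ Finset.range k,
            ((Nat.card K : ℝ) ^ e - (Nat.card K : ℝ) ^ i)) *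
            ((Nat.card K : ℝ) ^ e - (Nat.card K : ℝ) ^ k)) := by ring

lemma ratio (Ks : Submodule K V) (e : ℕ) (he : e ≤ finrank K V) :
    (ncnt Ks e : ℝ) = (ncnt (⊥ : Submodule K V) e : ℝ) *
      ∏ i ∈ Finset.range (finrank K Ks),
        (((Nat.card K : ℝ) ^ e - (Nat.card K : ℝ) ^ i) /
          ((Nat.card K : ℝ) ^ finrank K V - (Nat.card K : ℝ) ^ i)) := by
  have hq : (1 : ℝ) < (Nat.card K : ℝ) := by exact_mod_cast one_lt_cardK (K := K)
  have hne : ∀ i ∈ Finset.range (finrank K Ks),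
      ((Nat.card K : ℝ) ^ finrank K V - (Nat.card K : ℝ) ^ i) ≠ 0 := by
    intro i hi
    have hi' : i < finrank K V := lt_of_lt_of_le (Finset.mem_range.1 hi) Ks.finrank_le
    have := pow_lt_pow_right₀ hq hi'
    intro h
    nlinarith
  have hprod : (∏ i ∈ Finset.range (finrank K Ks),
      ((Nat.card K : ℝ) ^ finrank K V - (Nat.card K : ℝ) ^ i)) ≠ 0 :=
    Finset.prod_ne_zero_iff.2 hne
  have := prod_formula (K := K) (V := V) (finrank K Ks) Ks rfl e he
  rw [Finset.prod_div_distrib]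
  field_simp
  linarith [this]

end FracSub

/-- Let `p` be a prime, `m ≥ 0`, `w ≥ 1`, and `a₁, …, a_w ∈ ℤ_p^m = (ZMod p)^m`.
For `0 ≤ e ≤ m` let `λ(e)` be the fraction of subgroups `H` of `ℤ_p^m` of order `p^e`
such that `a_i − a_j ∉ H` for all `i ≠ j` (i.e. the `a_i` lie in pairwise distinct
cosets of `H`).  Then there is a real polynomial `P` of degree at most `w` with
`λ(e) = P(p^e)` for every `0 ≤ e ≤ m`. -/
theorem fraction_subgroups_distinct_cosets (p m w : ℕ) (hp : p.Prime) (hw : 1 ≤ w)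
    (a : Fin w → (Fin m → ZMod p)) :
    ∃ P : Polynomial ℝ, P.natDegree ≤ w ∧
      ∀ e : ℕ, e ≤ m →
        (Nat.card {H : AddSubgroup (Fin m → ZMod p) //
            Nat.card H = p ^ e ∧ ∀ i j : Fin w, i ≠ j → a i - a j ∉ H} : ℝ) /
          (Nat.card {H : AddSubgroup (Fin m → ZMod p) // Nat.card H = p ^ e} : ℝ) =
        P.eval ((p : ℝ) ^ e) := by
  haveI : Fact p.Prime := ⟨hp⟩
  classical
  have hq : Nat.card (ZMod p) = p := Nat.card_zmod p
  have hn : finrank (ZMod p) (Fin m → ZMod p) = m := Module.finrank_fin_fun (ZMod p)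
  -- the sets of index pairs, and spans of differences
  set D : Finset (Fin w × Fin w) := (Finset.univ : Finset (Fin w)).offDiag with hD
  set Ksp : Finset (Fin w × Fin w) → Submodule (ZMod p) (Fin m → ZMod p) :=
    fun t => Submodule.span (ZMod p) ↑(t.image (fun d => a d.1 - a d.2)) with hKsp
  -- dimension bound
  have hkw : ∀ t : Finset (Fin w × Fin w), finrank (ZMod p) (Ksp t) ≤ w := by
    intro t
    set i0 : Fin w := ⟨0, hw⟩
    have hsub : Ksp t ≤ Submodule.span (ZMod p) (Set.range fun i : Fin w => a i - a i0) := by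
      rw [hKsp, Submodule.span_le]
      intro x hx
      rw [Finset.coe_image] at hx
      obtain ⟨d, hd, rfl⟩ := hx
      have hrw : a d.1 - a d.2 = (a d.1 - a i0) - (a d.2 - a i0) := by abel
      show a d.1 - a d.2 ∈ _
      rw [hrw]
      exact sub_mem (Submodule.subset_span ⟨d.1, rfl⟩) (Submodule.subset_span ⟨d.2, rfl⟩)
    have hfr := finrank_range_le_card (R := ZMod p) (fun i : Fin w => a i - a i0)
    refine le_trans (Submodule.finrank_mono hsub) ?_
    simpa [Set.finrank] using hfr
  -- translation of the counting problems from AddSubgroups to Submodules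
  have hcard : ∀ (W : Submodule (ZMod p) (Fin m → ZMod p)) (e : ℕ),
      Nat.card W = p ^ e ↔ finrank (ZMod p) W = e := by
    intro W e
    rw [FracSub.card_submodule W, hq]
    exact ⟨fun h => Nat.pow_right_injective hp.two_le h, fun h => by rw [h]⟩
  have hmemcard : ∀ H : AddSubgroup (Fin m → ZMod p),
      Nat.card H = Nat.card (AddSubgroup.toZModSubmodule p H) :=
    fun H => Nat.card_congr (Equiv.subtypeEquivRight fun x =>
      (AddSubgroup.mem_toZModSubmodule p).symm)
  have hden : ∀ e : ℕ,
      Nat.card {H : AddSubgroup (Fin m → ZMod p) // Nat.card H = p ^ e}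
        = FracSub.ncnt (⊥ : Submodule (ZMod p) (Fin m → ZMod p)) e := by
    intro e
    rw [FracSub.ncnt]
    refine Nat.card_congr ((AddSubgroup.toZModSubmodule p).toEquiv.subtypeEquiv fun H => ?_)
    rw [hmemcard H, hcard]
    exact (and_iff_left bot_le).symm
  have hnum0 : ∀ e : ℕ,
      Nat.card {H : AddSubgroup (Fin m → ZMod p) //
          Nat.card H = p ^ e ∧ ∀ i j : Fin w, i ≠ j → a i - a j ∉ H}
        = Nat.card {W : Submodule (ZMod p) (Fin m → ZMod p) //
            finrank (ZMod p) W = e ∧ ∀ i j : Fin w, i ≠ j → a i - a j ∉ W} := by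
    intro e
    refine Nat.card_congr ((AddSubgroup.toZModSubmodule p).toEquiv.subtypeEquiv fun H => ?_)
    rw [hmemcard H, hcard]
    constructor
    · rintro ⟨h1, h2⟩
      exact ⟨h1, fun i j hij hmem => h2 i j hij ((AddSubgroup.mem_toZModSubmodule p).1 hmem)⟩
    · rintro ⟨h1, h2⟩
      exact ⟨h1, fun i j hij hmem => h2 i j hij ((AddSubgroup.mem_toZModSubmodule p).2 hmem)⟩
  -- inclusion-exclusion
  have hnum : ∀ e : ℕ,
      (Nat.card {W : Submodule (ZMod p) (Fin m → ZMod p) //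
          finrank (ZMod p) W = e ∧ ∀ i j : Fin w, i ≠ j → a i - a j ∉ W} : ℝ)
        = ∑ t ∈ D.powerset, (-1 : ℝ) ^ t.card * (FracSub.ncnt (Ksp t) e : ℝ) := by
    intro e
    letI : Fintype (Submodule (ZMod p) (Fin m → ZMod p)) := Fintype.ofFinite _
    have expand : ∀ W : Submodule (ZMod p) (Fin m → ZMod p),
        (if (∀ i j : Fin w, i ≠ j → a i - a j ∉ W) then (1:ℝ) else 0)
          = ∑ t ∈ D.powerset, (-1 : ℝ) ^ t.card * (if Ksp t ≤ W then (1:ℝ) else 0) := by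
      intro W
      have h1 : (if (∀ i j : Fin w, i ≠ j → a i - a j ∉ W) then (1:ℝ) else 0)
          = ∏ d ∈ D, ((-(if a d.1 - a d.2 ∈ W then (1:ℝ) else 0)) + 1) := by
        by_cases hQ : ∀ i j : Fin w, i ≠ j → a i - a j ∉ W
        · rw [if_pos hQ]
          refine (Finset.prod_eq_one fun d hd => ?_).symm
          rw [hD, Finset.mem_offDiag] at hd
          rw [if_neg (hQ d.1 d.2 hd.2.2)]
          ring
        · rw [if_neg hQ]
          push_neg at hQ
          obtain ⟨i, j, hij, hmem⟩ := hQ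
          refine (Finset.prod_eq_zero (i := (i, j)) ?_ ?_).symm
          · rw [hD]
            exact Finset.mem_offDiag.2 ⟨Finset.mem_univ _, Finset.mem_univ _, hij⟩
          · rw [if_pos hmem]; ring
      rw [h1, Finset.prod_add]
      refine Finset.sum_congr rfl fun t ht => ?_
      rw [Finset.prod_const_one, mul_one]
      have h2 : ∏ d ∈ t, (-(if a d.1 - a d.2 ∈ W then (1:ℝ) else 0))
          = (-1 : ℝ) ^ t.card * ∏ d ∈ t, (if a d.1 - a d.2 ∈ W then (1:ℝ) else 0) := by
        rw [Finset.prod_congr rfl (fun d _ =>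
          (neg_eq_neg_one_mul (if a d.1 - a d.2 ∈ W then (1:ℝ) else 0))),
          Finset.prod_mul_distrib, Finset.prod_const]
      rw [h2]
      congr 1
      by_cases hall : ∀ d ∈ t, a d.1 - a d.2 ∈ W
      · rw [Finset.prod_eq_one fun d hd => if_pos (hall d hd), if_pos]
        rw [hKsp, Submodule.span_le]
        intro x hx
        rw [Finset.coe_image] at hx
        obtain ⟨d, hd, rfl⟩ := hx
        exact hall d hd
      · push_neg at hall
        obtain ⟨d, hd, hdW⟩ := hall
        have hz : (∏ d ∈ t, if a d.1 - a d.2 ∈ W then (1:ℝ) else 0) = 0 :=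
          Finset.prod_eq_zero hd (if_neg hdW)
        rw [hz, if_neg]
        intro hle
        exact hdW (hle (Submodule.subset_span (by
          rw [Finset.coe_image]; exact ⟨d, hd, rfl⟩)))
    rw [Nat.card_eq_fintype_card, Fintype.card_subtype, Finset.card_filter]
    push_cast
    calc (∑ W : Submodule (ZMod p) (Fin m → ZMod p),
            if finrank (ZMod p) W = e ∧ (∀ i j : Fin w, i ≠ j → a i - a j ∉ W)
            then (1:ℝ) else 0)
        = ∑ W : Submodule (ZMod p) (Fin m → ZMod p),
            if finrank (ZMod p) W = e
            then (if (∀ i j : Fin w, i ≠ j → a i - a j ∉ W) then (1:ℝ) else 0) else 0 := by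
          refine Finset.sum_congr rfl fun W _ => ?_
          rw [ite_and]
      _ = ∑ W ∈ Finset.univ.filter (fun W : Submodule (ZMod p) (Fin m → ZMod p) =>
            finrank (ZMod p) W = e),
            (if (∀ i j : Fin w, i ≠ j → a i - a j ∉ W) then (1:ℝ) else 0) := by
          rw [Finset.sum_filter]
      _ = ∑ W ∈ Finset.univ.filter (fun W : Submodule (ZMod p) (Fin m → ZMod p) =>
            finrank (ZMod p) W = e),
            ∑ t ∈ D.powerset, (-1 : ℝ) ^ t.card * (if Ksp t ≤ W then (1:ℝ) else 0) :=
          Finset.sum_congr rfl fun W _ => expand W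
      _ = ∑ t ∈ D.powerset, ∑ W ∈ Finset.univ.filter
            (fun W : Submodule (ZMod p) (Fin m → ZMod p) => finrank (ZMod p) W = e),
            (-1 : ℝ) ^ t.card * (if Ksp t ≤ W then (1:ℝ) else 0) := Finset.sum_comm
      _ = ∑ t ∈ D.powerset, (-1 : ℝ) ^ t.card * (FracSub.ncnt (Ksp t) e : ℝ) := by
          refine Finset.sum_congr rfl fun t ht => ?_
          rw [← Finset.mul_sum]
          congr 1
          rw [Finset.sum_boole, Finset.filter_filter]
          norm_num
          rw [FracSub.ncnt, Nat.card_eq_fintype_card, Fintype.card_subtype]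
  -- the polynomial
  refine ⟨∑ t ∈ D.powerset, Polynomial.C ((-1 : ℝ) ^ t.card *
      (∏ i ∈ Finset.range (finrank (ZMod p) (Ksp t)), ((p:ℝ) ^ m - (p:ℝ) ^ i))⁻¹) *
      ∏ i ∈ Finset.range (finrank (ZMod p) (Ksp t)),
        (Polynomial.X - Polynomial.C ((p:ℝ) ^ i)), ?_, ?_⟩
  · refine Polynomial.natDegree_sum_le_of_forall_le _ _ fun t ht => ?_
    refine le_trans (Polynomial.natDegree_C_mul_le _ _) ?_
    refine le_trans (Polynomial.natDegree_prod_le _ _) ?_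
    refine le_trans (Finset.sum_le_card_nsmul _ _ 1 fun i _ =>
      Polynomial.natDegree_X_sub_C_le _) ?_
    simpa using hkw t
  · intro e he
    have hbotne : (FracSub.ncnt (⊥ : Submodule (ZMod p) (Fin m → ZMod p)) e : ℝ) ≠ 0 := by
      have := FracSub.ncnt_bot_ne_zero (K := ZMod p) (V := Fin m → ZMod p) e (by rw [hn]; exact he)
      exact_mod_cast this
    have hPne : ∀ i : ℕ, i < m → ((p:ℝ) ^ m - (p:ℝ) ^ i) ≠ 0 := by
      intro i hi
      have h1 : (p:ℝ) ^ i < (p:ℝ) ^ m :=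
        pow_lt_pow_right₀ (by exact_mod_cast hp.one_lt) hi
      intro h; nlinarith
    rw [hnum0 e, hden e, hnum e, Polynomial.eval_finset_sum, Finset.sum_div]
    refine Finset.sum_congr rfl fun t ht => ?_
    have hratio := FracSub.ratio (K := ZMod p) (V := Fin m → ZMod p) (Ksp t) e
      (by rw [hn]; exact he)
    rw [hq, hn] at hratio
    rw [hratio]
    rw [Polynomial.eval_mul, Polynomial.eval_C, Polynomial.eval_prod]
    simp only [Polynomial.eval_sub, Polynomial.eval_X, Polynomial.eval_C]
    rw [Finset.prod_div_distrib]
    have hprodne : (∏ i ∈ Finset.range (finrank (ZMod p) (Ksp t)),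
        ((p:ℝ) ^ m - (p:ℝ) ^ i)) ≠ 0 := by
      refine Finset.prod_ne_zero_iff.2 fun i hi => ?_
      refine hPne i ?_
      have hi' := Finset.mem_range.1 hi
      have hfl : finrank (ZMod p) (Ksp t) ≤ m := by
        have := (Ksp t).finrank_le
        rwa [hn] at this
      omega
    field_simp
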